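/- Let N = p + ℓ with p, ℓ ≥ 1, let U, Û ∈ ℝ^{N×r} each have orthonormal columns, and let Υ_f, Υ̂_f ∈ ℝ^{p×r} denote the submatrices of the first p rows of U and Û. Assume rank(Υ_f) = r and η := 2 sin θ_max · ‖Υ_f^†‖₂ < 1, where sin θ_max = ‖(I − UUᵀ)ÛÛᵀ‖₂. Then Υ̂_f has rank r and ‖Υ̂_f^†‖₂ ≤ ‖Υ_f^†‖₂ / (1 − η); equivalently, σ_r(Υ̂_f) ≥ (1 − η) σ_r(Υ_f). -/

import Mathlib

open Matrix

/-- The spectral (operator 2-) norm of a real matrix. -/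
noncomputable def spNorm {m n : ℕ} (M : Matrix (Fin m) (Fin n) ℝ) : ℝ :=
  ‖LinearMap.toContinuousLinearMap (Matrix.toEuclideanLin M)‖

/-- The Moore–Penrose pseudoinverse of a full-column-rank real matrix,
`M^† = (MᵀM)⁻¹Mᵀ`. -/
noncomputable def pinv {m n : ℕ} (M : Matrix (Fin m) (Fin n) ℝ) : Matrix (Fin n) (Fin m) ℝ :=
  (Mᵀ * M)⁻¹ * Mᵀ

/-- The smallest singular value of a real matrix, `σ_min(M) = √(λ_min(MᵀM))`. -/
noncomputable def sigmaMin {m n : ℕ} (M : Matrix (Fin m) (Fin n) ℝ) : ℝ :=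
  Real.sqrt (⨅ i, (show (Mᵀ * M).IsHermitian by
    simpa using Matrix.isHermitian_conjTranspose_mul_self M).eigenvalues i)

/-- The submatrix of the first `p` rows of a `(p+l) × r` matrix. -/
def firstRows {p l r : ℕ} (U : Matrix (Fin (p + l)) (Fin r) ℝ) : Matrix (Fin p) (Fin r) ℝ :=
  U.submatrix (fun i => Fin.castAdd l i) id

/-! ### Auxiliary definitions and lemmas -/

/-- Matrix-vector multiplication as a map of Euclidean spaces. -/
noncomputable def mvE {m n : ℕ} (M : Matrix (Fin m) (Fin n) ℝ) (x : EuclideanSpace ℝ (Fin n)) :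
    EuclideanSpace ℝ (Fin m) := WithLp.toLp 2 (M.mulVec x)

/-- Restriction of a Euclidean vector to its first `p` coordinates. -/
noncomputable def restr {p l : ℕ} (v : EuclideanSpace ℝ (Fin (p+l))) :
    EuclideanSpace ℝ (Fin p) := WithLp.toLp 2 (fun i => v (Fin.castAdd l i))

lemma inner_eq_dot {n : ℕ} (x y : EuclideanSpace ℝ (Fin n)) : (inner ℝ x y : ℝ) = x ⬝ᵥ y := by
  simp [PiLp.inner_apply, dotProduct, RCLike.inner_apply, mul_comm]

lemma norm_sq_dot {n : ℕ} (x : EuclideanSpace ℝ (Fin n)) : ‖x‖^2 = x ⬝ᵥ x := by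
  rw [← real_inner_self_eq_norm_sq, inner_eq_dot]

lemma spNorm_nonneg {m n : ℕ} (M : Matrix (Fin m) (Fin n) ℝ) : 0 ≤ spNorm M := norm_nonneg _

lemma mvE_le {m n : ℕ} (M : Matrix (Fin m) (Fin n) ℝ) (x : EuclideanSpace ℝ (Fin n)) :
    ‖mvE M x‖ ≤ spNorm M * ‖x‖ :=
  (LinearMap.toContinuousLinearMap (Matrix.toEuclideanLin M)).le_opNorm x

lemma spNorm_le {m n : ℕ} {M : Matrix (Fin m) (Fin n) ℝ} {c : ℝ} (hc : 0 ≤ c)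
    (h : ∀ x : EuclideanSpace ℝ (Fin n), ‖mvE M x‖ ≤ c * ‖x‖) : spNorm M ≤ c :=
  ContinuousLinearMap.opNorm_le_bound _ hc h

lemma dot_MtM {m n : ℕ} (M : Matrix (Fin m) (Fin n) ℝ) (x y : Fin n → ℝ) :
    x ⬝ᵥ ((Mᵀ*M) *ᵥ y) = (M *ᵥ x) ⬝ᵥ (M *ᵥ y) := by
  rw [← mulVec_mulVec, dotProduct_mulVec, vecMul_transpose]

lemma conjT_eq {m n : ℕ} (M : Matrix (Fin m) (Fin n) ℝ) : Mᴴ = Mᵀ := by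
  ext i j; simp [conjTranspose]

lemma mvE_norm_sq {m n : ℕ} (M : Matrix (Fin m) (Fin n) ℝ) (x : EuclideanSpace ℝ (Fin n)) :
    ‖mvE M x‖^2 = x ⬝ᵥ ((Mᴴ*M) *ᵥ x) := by
  rw [conjT_eq, dot_MtM, norm_sq_dot]; rfl

lemma lam_nonneg {m n : ℕ} (M : Matrix (Fin m) (Fin n) ℝ) :
    0 ≤ ⨅ i, (show (Mᵀ * M).IsHermitian by simpa using Matrix.isHermitian_conjTranspose_mul_self M).eigenvalues i := by
  rcases isEmpty_or_nonempty (Fin n) with h | h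
  · rw [iInf_of_isEmpty]; exact le_of_eq Real.sInf_empty.symm
  · exact le_ciInf fun i => Matrix.eigenvalues_conjTranspose_mul_self_nonneg M i

lemma sigmaMin_nonneg {m n : ℕ} (M : Matrix (Fin m) (Fin n) ℝ) : 0 ≤ sigmaMin M :=
  Real.sqrt_nonneg _

lemma rayleigh_le {n : ℕ} {A : Matrix (Fin n) (Fin n) ℝ} (hA : A.IsHermitian)
    (x : EuclideanSpace ℝ (Fin n)) :
    (⨅ i, hA.eigenvalues i) * ‖x‖^2 ≤ x ⬝ᵥ (A *ᵥ x) := by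
  rcases isEmpty_or_nonempty (Fin n) with h | h
  · have hx : x = 0 := Subsingleton.elim _ _
    simp [hx, dotProduct]
  · set b := hA.eigenvectorBasis with hb
    set c : Fin n → ℝ := fun i => b.repr x i with hc
    have hTb : ∀ i, Matrix.toEuclideanLin A (b i) = hA.eigenvalues i • b i := by
      intro i
      show WithLp.toLp 2 (A *ᵥ ⇑(b i)) = _
      exact congrArg (WithLp.toLp 2) (hA.mulVec_eigenvectorBasis i)
    have hxsum : x = ∑ i, c i • b i := (b.sum_repr x).symm
    have hTx : Matrix.toEuclideanLin A x = ∑ i, (hA.eigenvalues i * c i) • b i := by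
      conv_lhs => rw [hxsum]
      rw [map_sum]
      refine Finset.sum_congr rfl fun i _ => ?_
      rw [_root_.map_smul, hTb i, smul_smul, mul_comm]
    have key : x ⬝ᵥ (A *ᵥ x) = ∑ i, hA.eigenvalues i * c i ^ 2 := by
      have h0 : x ⬝ᵥ (A *ᵥ x) = (inner ℝ x (Matrix.toEuclideanLin A x) : ℝ) := by
        rw [inner_eq_dot]; rfl
      rw [h0, hTx, inner_sum]
      refine Finset.sum_congr rfl fun i _ => ?_
      rw [real_inner_smul_right, real_inner_comm,
        show (inner ℝ (b i) x : ℝ) = c i from (b.repr_apply_apply x i).symm]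
      ring
    have hnx : ‖x‖^2 = ∑ i, c i ^ 2 := by
      rw [← b.repr.norm_map x, norm_sq_dot]
      simp [dotProduct, hc, pow_two]
    rw [key, hnx, Finset.mul_sum]
    refine Finset.sum_le_sum fun i _ => ?_
    exact mul_le_mul_of_nonneg_right (ciInf_le (Finite.bddBelow_range _) i) (sq_nonneg _)

lemma exists_rayleigh {n : ℕ} [Nonempty (Fin n)] {A : Matrix (Fin n) (Fin n) ℝ}
    (hA : A.IsHermitian) :
    ∃ x : EuclideanSpace ℝ (Fin n), ‖x‖ = 1 ∧ x ⬝ᵥ (A *ᵥ x) = ⨅ i, hA.eigenvalues i := by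
  obtain ⟨i₀, hi₀⟩ := Finite.exists_min hA.eigenvalues
  have hiinf : (⨅ i, hA.eigenvalues i) = hA.eigenvalues i₀ :=
    le_antisymm (ciInf_le (Finite.bddBelow_range _) i₀) (le_ciInf hi₀)
  refine ⟨hA.eigenvectorBasis i₀, hA.eigenvectorBasis.orthonormal.1 i₀, ?_⟩
  rw [hiinf]
  calc (hA.eigenvectorBasis i₀ : EuclideanSpace ℝ (Fin n)) ⬝ᵥ (A *ᵥ hA.eigenvectorBasis i₀)
      = hA.eigenvectorBasis i₀ ⬝ᵥ (hA.eigenvalues i₀ • (hA.eigenvectorBasis i₀ : EuclideanSpace ℝ (Fin n)) : EuclideanSpace ℝ (Fin n)) := by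
        exact congrArg (dotProduct _) (hA.mulVec_eigenvectorBasis i₀)
    _ = hA.eigenvalues i₀ * ((hA.eigenvectorBasis i₀ : EuclideanSpace ℝ (Fin n)) ⬝ᵥ hA.eigenvectorBasis i₀) := by
        rw [WithLp.ofLp_smul, dotProduct_smul]; rfl
    _ = hA.eigenvalues i₀ := by
        rw [← norm_sq_dot, hA.eigenvectorBasis.orthonormal.1 i₀]; simp

lemma sigmaMin_mul_norm_le {m n : ℕ} (M : Matrix (Fin m) (Fin n) ℝ)
    (x : EuclideanSpace ℝ (Fin n)) : sigmaMin M * ‖x‖ ≤ ‖mvE M x‖ := by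
  have h1 : (sigmaMin M * ‖x‖)^2 ≤ ‖mvE M x‖^2 := by
    rw [mul_pow, sigmaMin, Real.sq_sqrt (lam_nonneg M), mvE_norm_sq]
    exact rayleigh_le _ x
  have := Real.sqrt_le_sqrt h1
  rwa [Real.sqrt_sq (mul_nonneg (sigmaMin_nonneg M) (norm_nonneg x)),
    Real.sqrt_sq (norm_nonneg _)] at this

lemma exists_sigmaMin {m n : ℕ} [Nonempty (Fin n)] (M : Matrix (Fin m) (Fin n) ℝ) :
    ∃ x : EuclideanSpace ℝ (Fin n), ‖x‖ = 1 ∧ ‖mvE M x‖ = sigmaMin M := by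
  obtain ⟨x, hx1, hx2⟩ := exists_rayleigh (show (Mᵀ * M).IsHermitian by simpa using Matrix.isHermitian_conjTranspose_mul_self M)
  refine ⟨x, hx1, ?_⟩
  have h : ‖mvE M x‖^2 = ⨅ i, (show (Mᵀ * M).IsHermitian by simpa using Matrix.isHermitian_conjTranspose_mul_self M).eigenvalues i := by
    rw [mvE_norm_sq]; exact hx2
  rw [← Real.sqrt_sq (norm_nonneg (mvE M x)), h]; rfl

lemma le_sigmaMin {m n : ℕ} [Nonempty (Fin n)] {M : Matrix (Fin m) (Fin n) ℝ} {c : ℝ}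
    (h : ∀ x : EuclideanSpace ℝ (Fin n), c * ‖x‖ ≤ ‖mvE M x‖) : c ≤ sigmaMin M := by
  obtain ⟨x, hx1, hx2⟩ := exists_sigmaMin M
  have := h x
  rwa [hx1, mul_one, hx2] at this

lemma rank_eq_iff_inj {m r : ℕ} (M : Matrix (Fin m) (Fin r) ℝ) :
    M.rank = r ↔ Function.Injective M.mulVecLin := by
  rw [← LinearMap.ker_eq_bot]
  have hadd := LinearMap.finrank_range_add_finrank_ker M.mulVecLin
  rw [Module.finrank_fintype_fun_eq_card, Fintype.card_fin] at hadd
  constructor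
  · intro h
    rw [Matrix.rank] at h
    rw [h] at hadd
    have h0 : Module.finrank ℝ (LinearMap.ker M.mulVecLin) = 0 := by omega
    exact Submodule.finrank_eq_zero.mp h0
  · intro h
    rw [h, finrank_bot] at hadd
    rw [Matrix.rank]; omega

lemma isUnit_MtM {m r : ℕ} {M : Matrix (Fin m) (Fin r) ℝ}
    (hinj : Function.Injective M.mulVecLin) : IsUnit (Mᵀ * M) := by
  rw [← Matrix.mulVec_injective_iff_isUnit]
  have hker := Matrix.ker_mulVecLin_transpose_mul_self M
  intro x y hxy
  have h1 : (Mᵀ * M).mulVecLin x = (Mᵀ * M).mulVecLin y := hxy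
  have h2 : (Mᵀ * M).mulVecLin (x - y) = 0 := by rw [map_sub, h1, sub_self]
  have h3 : x - y ∈ LinearMap.ker (Mᵀ * M).mulVecLin := h2
  rw [hker] at h3
  have h4 : M.mulVecLin (x - y) = M.mulVecLin 0 := by rw [h3]; simp
  have := hinj h4
  linear_combination (norm := (ext i; simp)) this

lemma pinv_mul_cancel {m r : ℕ} {M : Matrix (Fin m) (Fin r) ℝ} (hu : IsUnit (Mᵀ * M))
    (x : Fin r → ℝ) : (pinv M) *ᵥ (M *ᵥ x) = x := by
  rw [mulVec_mulVec, pinv, Matrix.mul_assoc,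
    Matrix.nonsing_inv_mul _ ((Matrix.isUnit_iff_isUnit_det _).mp hu), one_mulVec]

lemma MtM_pinv {m r : ℕ} {M : Matrix (Fin m) (Fin r) ℝ} (hu : IsUnit (Mᵀ * M))
    (y : Fin m → ℝ) : (Mᵀ * M) *ᵥ ((pinv M) *ᵥ y) = Mᵀ *ᵥ y := by
  rw [mulVec_mulVec, pinv, ← Matrix.mul_assoc,
    Matrix.mul_nonsing_inv _ ((Matrix.isUnit_iff_isUnit_det _).mp hu), Matrix.one_mul]

lemma pinv_bound {m r : ℕ} {M : Matrix (Fin m) (Fin r) ℝ} (hu : IsUnit (Mᵀ * M))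
    (y : EuclideanSpace ℝ (Fin m)) :
    sigmaMin M * ‖mvE (pinv M) y‖ ≤ ‖y‖ := by
  set x : EuclideanSpace ℝ (Fin r) := mvE (pinv M) y with hx
  have h1 : (Mᵀ*M) *ᵥ x = Mᵀ *ᵥ y := MtM_pinv hu y
  have h2 : ‖mvE M x‖^2 = (inner ℝ (mvE M x) y : ℝ) := by
    rw [mvE_norm_sq, conjT_eq, h1, dotProduct_mulVec, vecMul_transpose, inner_eq_dot]; rfl
  have h3 : ‖mvE M x‖ ≤ ‖y‖ := by
    rcases eq_or_lt_of_le (norm_nonneg (mvE M x)) with h | h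
    · rw [← h]; exact norm_nonneg y
    · have hcs := real_inner_le_norm (mvE M x) y
      nlinarith [h2]
  calc sigmaMin M * ‖x‖ ≤ ‖mvE M x‖ := sigmaMin_mul_norm_le M x
    _ ≤ ‖y‖ := h3

lemma restr_le {p l : ℕ} (v : EuclideanSpace ℝ (Fin (p+l))) : ‖restr (p := p) v‖ ≤ ‖v‖ := by
  rw [EuclideanSpace.norm_eq (restr v), EuclideanSpace.norm_eq v]
  apply Real.sqrt_le_sqrt
  rw [Fin.sum_univ_add]
  exact le_add_of_nonneg_right (Finset.sum_nonneg fun i _ => sq_nonneg _)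

lemma mvE_orth {N r : ℕ} {U : Matrix (Fin N) (Fin r) ℝ} (hU : Uᵀ * U = 1)
    (x : EuclideanSpace ℝ (Fin r)) : ‖mvE U x‖ = ‖x‖ := by
  have h : ‖mvE U x‖^2 = ‖x‖^2 := by
    rw [mvE_norm_sq, conjT_eq, hU, one_mulVec, norm_sq_dot]
  have := congrArg Real.sqrt h
  rwa [Real.sqrt_sq (norm_nonneg _), Real.sqrt_sq (norm_nonneg _)] at this

lemma sigmaMin_zero_cols {m : ℕ} (M : Matrix (Fin m) (Fin 0) ℝ) : sigmaMin M = 0 := by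
  rw [sigmaMin, iInf_of_isEmpty, Real.sInf_empty, Real.sqrt_zero]

/-- If `rank Υ_f = r` and `η = 2 sin θ_max ‖Υ_f^†‖₂ < 1`, then
`Υ̂_f` has rank `r` and `‖Υ̂_f^†‖₂ ≤ ‖Υ_f^†‖₂/(1 − η)`; equivalently
`σ_r(Υ̂_f) ≥ (1 − η) σ_r(Υ_f)`. -/
theorem pinv_norm_perturbation (p l r : ℕ) (hp : 1 ≤ p) (hl : 1 ≤ l)
    (U Uh : Matrix (Fin (p + l)) (Fin r) ℝ)
    (hU : Uᵀ * U = 1) (hUh : Uhᵀ * Uh = 1)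
    (hrank : (firstRows U).rank = r)
    (hη : 2 * spNorm ((1 - U * Uᵀ) * (Uh * Uhᵀ)) * spNorm (pinv (firstRows U)) < 1) :
    (firstRows Uh).rank = r ∧
    spNorm (pinv (firstRows Uh)) ≤
      spNorm (pinv (firstRows U)) /
        (1 - 2 * spNorm ((1 - U * Uᵀ) * (Uh * Uhᵀ)) * spNorm (pinv (firstRows U))) ∧
    sigmaMin (firstRows Uh) ≥
      (1 - 2 * spNorm ((1 - U * Uᵀ) * (Uh * Uhᵀ)) * spNorm (pinv (firstRows U))) *
        sigmaMin (firstRows U) := by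
  set S := (1 - U * Uᵀ) * (Uh * Uhᵀ) with hSdef
  set s := spNorm S with hsdef
  set k := spNorm (pinv (firstRows U)) with hkdef
  have hs0 : 0 ≤ s := spNorm_nonneg S
  have hk0 : 0 ≤ k := spNorm_nonneg _
  have h1η : 0 < 1 - 2 * s * k := by nlinarith
  rcases Nat.eq_zero_or_pos r with hr | hr
  · subst hr
    haveI : Subsingleton (EuclideanSpace ℝ (Fin 0)) := ⟨fun a b => WithLp.ofLp_injective 2 (funext fun i => i.elim0)⟩
    refine ⟨le_antisymm (by simpa using (firstRows Uh).rank_le_card_width) (Nat.zero_le _), ?_, ?_⟩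
    · have hz : spNorm (pinv (firstRows Uh)) ≤ 0 := by
        apply spNorm_le le_rfl
        intro x
        rw [Subsingleton.elim (mvE (pinv (firstRows Uh)) x) 0, norm_zero, zero_mul]
      exact hz.trans (div_nonneg hk0 h1η.le)
    · rw [sigmaMin_zero_cols, sigmaMin_zero_cols, mul_zero]
  · haveI : Nonempty (Fin r) := Fin.pos_iff_nonempty.mp hr
    set Uf := firstRows U with hUfdef
    set Uhf := firstRows Uh with hUhfdef
    set σ := sigmaMin Uf with hσdef
    have hσ0 : 0 ≤ σ := sigmaMin_nonneg Uf
    have hinjU : Function.Injective Uf.mulVecLin := (rank_eq_iff_inj Uf).mp hrank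
    obtain ⟨x₀, hx₀1, hx₀2⟩ := exists_sigmaMin Uf
    -- σ > 0
    have hσpos : 0 < σ := by
      rcases hσ0.lt_or_eq with h | h
      · exact h
      · exfalso
        have hz : ‖mvE Uf x₀‖ = 0 := by rw [hx₀2, ← hσdef]; exact h.symm
        have hz2 : mvE Uf x₀ = 0 := norm_eq_zero.mp hz
        have hz3 : Uf.mulVecLin x₀ = Uf.mulVecLin 0 := by
          rw [map_zero]; exact congrArg WithLp.ofLp hz2
        have : x₀ = 0 := WithLp.ofLp_injective 2 (by simpa using hinjU hz3)
        rw [this, norm_zero] at hx₀1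
        exact one_ne_zero hx₀1.symm
    -- σ ≤ 1
    have hrfl : ∀ (A : Matrix (Fin (p+l)) (Fin r) ℝ) (x : EuclideanSpace ℝ (Fin r)),
        mvE (firstRows A) x = restr (mvE A x) := fun A x => rfl
    have hσ1 : σ ≤ 1 := by
      have h1 : ‖mvE Uf x₀‖ ≤ ‖mvE U x₀‖ := by
        rw [hUfdef, hrfl U x₀]; exact restr_le (mvE U x₀)
      rw [hx₀2, mvE_orth hU, hx₀1] at h1
      exact h1
    -- 1 ≤ σ * k
    have huU : IsUnit (Ufᵀ * Uf) := isUnit_MtM hinjU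
    have hk1 : 1 ≤ σ * k := by
      have h1 : mvE (pinv Uf) (mvE Uf x₀) = x₀ := WithLp.ofLp_injective 2 (pinv_mul_cancel huU x₀)
      have h2 := mvE_le (pinv Uf) (mvE Uf x₀)
      rw [h1, hx₀1, hx₀2] at h2
      rw [hkdef, hσdef]
      nlinarith [h2]
    -- matrix decomposition
    set C := Uᵀ * Uh with hCdef
    have hMid : S * Uh = Uh - U * C := by
      calc S * Uh = (1 - U * Uᵀ) * (Uh * (Uhᵀ * Uh)) := by
            rw [hSdef, Matrix.mul_assoc, Matrix.mul_assoc]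
        _ = (1 - U * Uᵀ) * Uh := by rw [hUh, Matrix.mul_one]
        _ = Uh - U * C := by rw [Matrix.sub_mul, Matrix.one_mul, hCdef, Matrix.mul_assoc]
    -- pointwise lower bound
    have hpoint : ∀ x : EuclideanSpace ℝ (Fin r),
        (1 - 2 * s * k) * σ * ‖x‖ ≤ ‖mvE Uhf x‖ := by
      intro x
      have ha : ‖mvE S (mvE Uh x)‖ ≤ s * ‖x‖ := by
        calc ‖mvE S (mvE Uh x)‖ ≤ s * ‖mvE Uh x‖ := mvE_le S _
          _ = s * ‖x‖ := by rw [mvE_orth hUh]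
      have hUC : mvE U (mvE C x) = mvE Uh x - mvE S (mvE Uh x) := by
        apply WithLp.ofLp_injective 2; show U *ᵥ (C *ᵥ x) = Uh *ᵥ x - S *ᵥ (Uh *ᵥ x)
        rw [mulVec_mulVec, mulVec_mulVec]
        have : (U * C) *ᵥ x = (Uh - S * Uh) *ᵥ x := by
          rw [show Uh - S * Uh = U * C by rw [hMid]; abel]
        rw [this, Matrix.sub_mulVec]
      have hb : (1 - s) * ‖x‖ ≤ ‖mvE C x‖ := by
        have h1 : ‖mvE Uh x‖ - ‖mvE S (mvE Uh x)‖ ≤ ‖mvE Uh x - mvE S (mvE Uh x)‖ :=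
          norm_sub_norm_le _ _
        rw [← hUC, mvE_orth hU, mvE_orth hUh] at h1
        nlinarith
      have hc : σ * ((1 - s) * ‖x‖) ≤ ‖mvE Uf (mvE C x)‖ := by
        calc σ * ((1 - s) * ‖x‖) ≤ σ * ‖mvE C x‖ :=
              mul_le_mul_of_nonneg_left hb hσ0
          _ ≤ ‖mvE Uf (mvE C x)‖ := sigmaMin_mul_norm_le Uf _
      have h5 : mvE Uh x = mvE U (mvE C x) + mvE S (mvE Uh x) := by
        rw [hUC]; abel
      have hd : mvE Uhf x = mvE Uf (mvE C x) + restr (mvE S (mvE Uh x)) :=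
        calc mvE Uhf x = restr (mvE Uh x) := hrfl Uh x
          _ = restr (mvE U (mvE C x) + mvE S (mvE Uh x)) := congrArg _ h5
          _ = mvE Uf (mvE C x) + restr (mvE S (mvE Uh x)) := rfl
      have he : ‖mvE Uf (mvE C x)‖ - ‖restr (mvE S (mvE Uh x))‖ ≤ ‖mvE Uhf x‖ := by
        rw [hd]
        have h6 : ‖mvE Uf (mvE C x)‖ ≤
            ‖mvE Uf (mvE C x) + restr (mvE S (mvE Uh x))‖ + ‖restr (mvE S (mvE Uh x))‖ := by
          calc ‖mvE Uf (mvE C x)‖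
              = ‖(mvE Uf (mvE C x) + restr (mvE S (mvE Uh x))) - restr (mvE S (mvE Uh x))‖ := by
                rw [add_sub_cancel_right]
            _ ≤ _ := norm_sub_le _ _
        linarith
      have hf : ‖restr (mvE S (mvE Uh x))‖ ≤ s * ‖x‖ :=
        (restr_le _).trans ha
      have hx0 : (0:ℝ) ≤ ‖x‖ := norm_nonneg x
      nlinarith [mul_nonneg hs0 hx0, mul_nonneg (mul_nonneg hs0 hk0) hx0]
    have hcpos : 0 < (1 - 2 * s * k) * σ := mul_pos h1η hσpos
    -- injectivity of Uhf
    have hinjh : Function.Injective Uhf.mulVecLin := by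
      rw [← LinearMap.ker_eq_bot, LinearMap.ker_eq_bot']
      intro z hz
      have h1 := hpoint (WithLp.toLp 2 z)
      rw [show mvE Uhf (WithLp.toLp 2 z) = 0 from congrArg (WithLp.toLp 2) hz, norm_zero] at h1
      have hz4 : WithLp.toLp 2 z = 0 := norm_le_zero_iff.mp
        (le_of_mul_le_mul_left (by rw [mul_zero]; exact h1) hcpos)
      exact congrArg WithLp.ofLp hz4
    have hrankh : Uhf.rank = r := (rank_eq_iff_inj Uhf).mpr hinjh
    have hσh : (1 - 2 * s * k) * σ ≤ sigmaMin Uhf := le_sigmaMin hpoint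
    have hσhpos : 0 < sigmaMin Uhf := lt_of_lt_of_le hcpos hσh
    refine ⟨hrankh, ?_, hσh⟩
    -- pinv norm bound
    have huh : IsUnit (Uhfᵀ * Uhf) := isUnit_MtM hinjh
    have hb : spNorm (pinv Uhf) ≤ (sigmaMin Uhf)⁻¹ := by
      apply spNorm_le (inv_nonneg.mpr hσhpos.le)
      intro y
      have h7 := pinv_bound huh y
      calc ‖mvE (pinv Uhf) y‖
          = (sigmaMin Uhf)⁻¹ * (sigmaMin Uhf * ‖mvE (pinv Uhf) y‖) := by
            rw [← mul_assoc, inv_mul_cancel₀ hσhpos.ne', one_mul]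
        _ ≤ (sigmaMin Uhf)⁻¹ * ‖y‖ :=
            mul_le_mul_of_nonneg_left h7 (inv_nonneg.mpr hσhpos.le)
    refine hb.trans ?_
    rw [inv_eq_one_div, div_le_div_iff₀ hσhpos h1η]
    calc 1 * (1 - 2*s*k) = (1 - 2*s*k) * 1 := by ring
      _ ≤ (1 - 2*s*k) * (σ*k) := mul_le_mul_of_nonneg_left hk1 h1η.le
      _ = k * ((1 - 2*s*k) * σ) := by ring
      _ ≤ k * sigmaMin Uhf := mul_le_mul_of_nonneg_left hσh hk0
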